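/- arXiv:2301.04828 — 4 statements merged into one kernel-verified Lean document; each statement's English description precedes it below -/
import Mathlib

section
/- Gradient formula for the QC log posterior: for symmetric positive definite Σ, the derivative of ℓ(Σ) = (n/2)·log det(Σ⁻¹) − (n/2)·tr(S Σ⁻¹) − (1/4)·tr(Σ⁻¹(Θ ∘ Σ⁻¹)) in the direction of a symmetric matrix H equals (n/2)·tr(Σ⁻¹[−Σ + S + (1/n)(Σ⁻¹ ∘ Θ)]Σ⁻¹ H), where Θ is symmetric. -/
open Matrix Real

open Polynomial Filter Topology


lemma inv_line_entry_hasDerivAt {d : ℕ} (A H : Matrix (Fin d) (Fin d) ℝ) (hA : A.PosDef)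
    (i j : Fin d) :
    HasDerivAt (fun t : ℝ => ((A + t • H)⁻¹) i j) ((-(A⁻¹ * H * A⁻¹)) i j) 0 := by
  have hdet : (0:ℝ) < A.det := hA.det_pos
  have hcM : Continuous (fun t : ℝ => A + t • H) :=
    continuous_const.add (continuous_id.smul continuous_const)
  have hc : Continuous (fun t : ℝ => (A + t • H).det) := hcM.matrix_det
  have hc0 : (A + (0:ℝ) • H).det = A.det := by simp
  have hpos : ∀ᶠ t in 𝓝 (0:ℝ), 0 < (A + t • H).det := by
    have h0 : (0:ℝ) < (A + (0:ℝ) • H).det := by rw [hc0]; exact hdet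
    exact hc.continuousAt.eventually_mem (Ioi_mem_nhds h0)
  have hN0 : (A + (0:ℝ) • H)⁻¹ = A⁻¹ := by simp
  have hNc : ∀ k l : Fin d, ContinuousAt (fun t : ℝ => ((A + t • H)⁻¹) k l) 0 := by
    intro k l
    have heq : (fun t : ℝ => ((A + t • H)⁻¹) k l)
        = fun t : ℝ => ((A + t • H).det)⁻¹ * (A + t • H).adjugate k l := by
      funext t
      rw [Matrix.inv_def]
      simp [Ring.inverse_eq_inv']
    rw [heq]
    exact ((hc.continuousAt).inv₀ (by rw [hc0]; exact hdet.ne')).mul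
      ((hcM.matrix_adjugate).matrix_elem k l).continuousAt
  have hNc' : ∀ k l : Fin d,
      Tendsto (fun t : ℝ => ((A + t • H)⁻¹) k l) (𝓝 0) (𝓝 (A⁻¹ k l)) := by
    intro k l
    have h := hNc k l
    have : Tendsto (fun t : ℝ => ((A + t • H)⁻¹) k l) (𝓝 0)
        (𝓝 ((A + (0:ℝ) • H)⁻¹ k l)) := h
    rwa [hN0] at this
  -- eventual identity
  have hev : ∀ᶠ t in 𝓝 (0:ℝ),
      (A + t • H)⁻¹ = A⁻¹ - t • (A⁻¹ * H * (A + t • H)⁻¹) := by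
    filter_upwards [hpos] with t ht
    have hunit : IsUnit (A + t • H).det := isUnit_iff_ne_zero.mpr ht.ne'
    have h1 : (A + t • H) * (A + t • H)⁻¹ = 1 := Matrix.mul_nonsing_inv _ hunit
    have hBA : A⁻¹ * A = 1 := Matrix.nonsing_inv_mul _ (isUnit_iff_ne_zero.mpr hdet.ne')
    have e1 : A⁻¹ * ((A + t • H) * (A + t • H)⁻¹)
        = (A + t • H)⁻¹ + t • (A⁻¹ * H * (A + t • H)⁻¹) := by
      rw [Matrix.add_mul, Matrix.mul_add, Matrix.smul_mul, Matrix.mul_smul,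
        ← Matrix.mul_assoc A⁻¹ A _, hBA, one_mul, Matrix.mul_assoc]
    rw [h1, mul_one] at e1
    exact eq_sub_of_add_eq e1.symm
  rw [hasDerivAt_iff_tendsto_slope]
  have hsum : Tendsto (fun t : ℝ => -((A⁻¹ * H * (A + t • H)⁻¹) i j)) (𝓝 0)
      (𝓝 ((-(A⁻¹ * H * A⁻¹)) i j)) := by
    have h1 : ∀ t : ℝ, (A⁻¹ * H * (A + t • H)⁻¹) i j
        = ∑ k, (A⁻¹ * H) i k * ((A + t • H)⁻¹) k j := fun t => Matrix.mul_apply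
    simp only [h1]
    have h2 : (-(A⁻¹ * H * A⁻¹)) i j = -(∑ k, (A⁻¹ * H) i k * A⁻¹ k j) := by
      simp [Matrix.mul_apply]
    rw [h2]
    exact (tendsto_finset_sum _ (fun k _ => tendsto_const_nhds.mul (hNc' k j))).neg
  refine Tendsto.congr' ?_ (hsum.mono_left nhdsWithin_le_nhds)
  have hev' : ∀ᶠ t in 𝓝[≠] (0:ℝ),
      (A + t • H)⁻¹ = A⁻¹ - t • (A⁻¹ * H * (A + t • H)⁻¹) :=
    eventually_nhdsWithin_of_eventually_nhds hev
  filter_upwards [hev', self_mem_nhdsWithin] with t ht htne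
  have htne' : t ≠ 0 := htne
  rw [slope_def_field]
  simp only [hN0]
  have hnum : (A + t • H)⁻¹ i j - A⁻¹ i j
      = -(t * (A⁻¹ * H * (A + t • H)⁻¹) i j) := by
    conv_lhs => rw [ht]
    simp [Matrix.sub_apply]
  rw [hnum, sub_zero]
  field_simp

lemma logdet_line_hasDerivAt {d : ℕ} (A H : Matrix (Fin d) (Fin d) ℝ) (hA : A.PosDef) :
    HasDerivAt (fun t : ℝ => Real.log ((A + t • H).det)) ((A⁻¹ * H).trace) 0 := by
  have hdet : (0:ℝ) < A.det := hA.det_pos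
  have hAB : A * A⁻¹ = 1 := Matrix.mul_nonsing_inv _ (isUnit_iff_ne_zero.mpr hdet.ne')
  have hfac : ∀ t : ℝ, A + t • H = A * (1 + t • (A⁻¹ * H)) := by
    intro t
    rw [Matrix.mul_add, mul_one, Matrix.mul_smul, ← Matrix.mul_assoc, hAB, one_mul]
  set p : Polynomial ℝ :=
    ((1 + (Polynomial.X : Polynomial ℝ) • ((A⁻¹ * H)).map Polynomial.C).det).divX.divX with hp
  have hdetf : ∀ t : ℝ, (A + t • H).det
      = A.det * (1 + (A⁻¹ * H).trace * t + p.eval t * t ^ 2) := by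
    intro t
    rw [hfac, Matrix.det_mul, Matrix.det_one_add_smul, hp]
  have h1 : HasDerivAt (fun t : ℝ => (A⁻¹ * H).trace * t) ((A⁻¹ * H).trace) 0 := by
    simpa using (hasDerivAt_id (0:ℝ)).const_mul ((A⁻¹ * H).trace)
  have h2 : HasDerivAt (fun t : ℝ => p.eval t * t ^ 2) 0 0 := by
    have := (p.hasDerivAt (0:ℝ)).mul (hasDerivAt_pow 2 (0:ℝ))
    exact this.congr_deriv (by simp)
  have hinner : HasDerivAt (fun t : ℝ => 1 + (A⁻¹ * H).trace * t + p.eval t * t ^ 2)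
      ((A⁻¹ * H).trace) 0 := by
    exact (((hasDerivAt_const (0:ℝ) (1:ℝ)).add h1).add h2).congr_deriv (by simp)
  have hcd : HasDerivAt (fun t : ℝ => (A + t • H).det) (A.det * (A⁻¹ * H).trace) 0 := by
    simp only [hdetf]
    exact hinner.const_mul A.det
  have hne : (A + (0:ℝ) • H).det ≠ 0 := by simpa using hdet.ne'
  have hfin := hcd.log hne
  have hval : A.det * (A⁻¹ * H).trace / (A + (0:ℝ) • H).det = (A⁻¹ * H).trace := by
    rw [show (A + (0:ℝ) • H).det = A.det by simp]
    field_simp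
  rwa [hval] at hfin

lemma trace_mul_hadamard_of_symm {d : ℕ} {Θ B K : Matrix (Fin d) (Fin d) ℝ} (hΘ : Θ.IsSymm) :
    (B * Matrix.hadamard Θ K).trace = (Matrix.hadamard B Θ * K).trace := by
  simp only [Matrix.trace, Matrix.diag, Matrix.mul_apply, Matrix.hadamard_apply]
  refine Finset.sum_congr rfl fun i _ => Finset.sum_congr rfl fun j _ => ?_
  rw [hΘ.apply j i]
  ring

/-- Gradient formula for the QC log posterior: for positive definite `A` and
symmetric direction `H`, the derivative at `t = 0` of
`t ↦ ℓ(A + t·H)` with `ℓ(A) = (n/2)·log det A⁻¹ − (n/2)·tr(S A⁻¹) − (1/4)·tr(A⁻¹(Θ ∘ A⁻¹))`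
equals `(n/2)·tr(A⁻¹[−A + S + (1/n)(A⁻¹ ∘ Θ)]A⁻¹ H)`. -/
theorem qc_directional_derivative (d : ℕ) (n : ℝ) (hn : 0 < n)
    (S Θ : Matrix (Fin d) (Fin d) ℝ) (hSsymm : S.IsSymm) (hΘsymm : Θ.IsSymm)
    (ℓ : Matrix (Fin d) (Fin d) ℝ → ℝ)
    (hℓ : ∀ A : Matrix (Fin d) (Fin d) ℝ,
      ℓ A = (n / 2) * Real.log (A⁻¹).det - (n / 2) * (S * A⁻¹).trace
        - (1 / 4) * (A⁻¹ * Matrix.hadamard Θ A⁻¹).trace)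
    (A H : Matrix (Fin d) (Fin d) ℝ) (hA : A.PosDef) (hH : H.IsSymm) :
    HasDerivAt (fun t : ℝ => ℓ (A + t • H))
      ((n / 2) * (A⁻¹ * (-A + S + (1 / n) • Matrix.hadamard A⁻¹ Θ) * A⁻¹ * H).trace)
      0 := by
  have hdet : (0:ℝ) < A.det := hA.det_pos
  have hA0 : A + (0:ℝ) • H = A := by simp
  have hE : ∀ i j, HasDerivAt (fun t : ℝ => ((A + t • H)⁻¹) i j)
      ((-(A⁻¹ * H * A⁻¹)) i j) 0 := fun i j => inv_line_entry_hasDerivAt A H hA i j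
  have htr : ∀ M N : Matrix (Fin d) (Fin d) ℝ,
      (M * N).trace = ∑ i, ∑ j, M i j * N j i := by
    intro M N
    simp [Matrix.trace, Matrix.diag, Matrix.mul_apply]
  have hfun : (fun t : ℝ => ℓ (A + t • H)) = fun t : ℝ =>
      -(n / 2) * Real.log ((A + t • H).det)
      - (n / 2) * (∑ i, ∑ j, S i j * ((A + t • H)⁻¹) j i)
      - (1 / 4) * (∑ i, ∑ j, ((A + t • H)⁻¹) i j * (Θ j i * ((A + t • H)⁻¹) j i)) := by
    funext t
    rw [hℓ]
    have e1 : Real.log ((A + t • H)⁻¹).det = -Real.log ((A + t • H).det) := by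
      rw [Matrix.det_nonsing_inv, Ring.inverse_eq_inv', Real.log_inv]
    have e2 : ((A + t • H)⁻¹ * Matrix.hadamard Θ (A + t • H)⁻¹).trace
        = ∑ i, ∑ j, ((A + t • H)⁻¹) i j * (Θ j i * ((A + t • H)⁻¹) j i) := by
      simp [Matrix.trace, Matrix.diag, Matrix.mul_apply, Matrix.hadamard_apply]
    rw [e1, e2, htr]
    ring
  rw [hfun]
  have hd1 : HasDerivAt (fun t : ℝ => -(n / 2) * Real.log ((A + t • H).det))
      (-(n / 2) * (A⁻¹ * H).trace) 0 :=
    (logdet_line_hasDerivAt A H hA).const_mul _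
  have hd2 : HasDerivAt (fun t : ℝ => ∑ i, ∑ j, S i j * ((A + t • H)⁻¹) j i)
      (∑ i, ∑ j, S i j * (-(A⁻¹ * H * A⁻¹)) j i) 0 :=
    HasDerivAt.fun_sum fun i _ => HasDerivAt.fun_sum fun j _ => (hE j i).const_mul _
  have hd3 : HasDerivAt
      (fun t : ℝ => ∑ i, ∑ j, ((A + t • H)⁻¹) i j * (Θ j i * ((A + t • H)⁻¹) j i))
      (∑ i, ∑ j, ((-(A⁻¹ * H * A⁻¹)) i j * (Θ j i * A⁻¹ j i)
        + A⁻¹ i j * (Θ j i * (-(A⁻¹ * H * A⁻¹)) j i))) 0 := by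
    refine HasDerivAt.fun_sum fun i _ => HasDerivAt.fun_sum fun j _ => ?_
    have := (hE i j).mul ((hE j i).const_mul (Θ j i))
    exact this.congr_deriv (by simp [hA0])
  have hmain := (hd1.sub (hd2.const_mul (n / 2))).sub (hd3.const_mul (1 / 4))
  refine hmain.congr_deriv (Eq.symm ?_)
  -- now the value equality
  have hBA : A⁻¹ * A = 1 := Matrix.nonsing_inv_mul _ (isUnit_iff_ne_zero.mpr hdet.ne')
  have hBA' : ∀ X : Matrix (Fin d) (Fin d) ℝ, A⁻¹ * (A * X) = X := fun X => by
    rw [← Matrix.mul_assoc, hBA, one_mul]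
  -- sums back to traces
  have s2 : (∑ i, ∑ j, S i j * (-(A⁻¹ * H * A⁻¹)) j i)
      = -((S * (A⁻¹ * H * A⁻¹)).trace) := by
    rw [htr]
    simp [Matrix.neg_apply, Finset.sum_neg_distrib]
  have s3 : (∑ i, ∑ j, ((-(A⁻¹ * H * A⁻¹)) i j * (Θ j i * A⁻¹ j i)
        + A⁻¹ i j * (Θ j i * (-(A⁻¹ * H * A⁻¹)) j i)))
      = -((A⁻¹ * H * A⁻¹) * Matrix.hadamard Θ A⁻¹).trace
        - (A⁻¹ * Matrix.hadamard Θ (A⁻¹ * H * A⁻¹)).trace := by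
    simp only [Finset.sum_add_distrib]
    congr 1
    · rw [htr]
      simp [Matrix.hadamard_apply, Matrix.neg_apply, Finset.sum_neg_distrib]
    · rw [htr]
      simp [Matrix.hadamard_apply, Matrix.neg_apply, Finset.sum_neg_distrib, mul_neg, neg_mul]
  rw [s2, s3]
  -- trace identities
  have t1 : (S * (A⁻¹ * H * A⁻¹)).trace = (A⁻¹ * S * A⁻¹ * H).trace := by
    rw [show S * (A⁻¹ * H * A⁻¹) = S * A⁻¹ * H * A⁻¹ by noncomm_ring,
      Matrix.trace_mul_comm]
    congr 1
    noncomm_ring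
  have t2 : ((A⁻¹ * H * A⁻¹) * Matrix.hadamard Θ A⁻¹).trace
      = (Matrix.hadamard A⁻¹ Θ * (A⁻¹ * H * A⁻¹)).trace := by
    rw [Matrix.trace_mul_comm, Matrix.hadamard_comm]
  have t3 : (A⁻¹ * Matrix.hadamard Θ (A⁻¹ * H * A⁻¹)).trace
      = (Matrix.hadamard A⁻¹ Θ * (A⁻¹ * H * A⁻¹)).trace :=
    trace_mul_hadamard_of_symm hΘsymm
  have t4 : (A⁻¹ * Matrix.hadamard A⁻¹ Θ * A⁻¹ * H).trace
      = (Matrix.hadamard A⁻¹ Θ * (A⁻¹ * H * A⁻¹)).trace := by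
    rw [show A⁻¹ * Matrix.hadamard A⁻¹ Θ * A⁻¹ * H
        = A⁻¹ * (Matrix.hadamard A⁻¹ Θ * A⁻¹ * H) by noncomm_ring,
      Matrix.trace_mul_comm]
    congr 1
    noncomm_ring
  have expand : A⁻¹ * (-A + S + (1 / n) • Matrix.hadamard A⁻¹ Θ) * A⁻¹ * H
      = -(A⁻¹ * H) + A⁻¹ * S * A⁻¹ * H
        + (1 / n) • (A⁻¹ * Matrix.hadamard A⁻¹ Θ * A⁻¹ * H) := by
    simp only [Matrix.mul_add, Matrix.add_mul, Matrix.neg_mul, Matrix.mul_neg,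
      Matrix.smul_mul, Matrix.mul_smul, Matrix.mul_assoc, hBA']
  rw [expand, Matrix.trace_add, Matrix.trace_add, Matrix.trace_neg, Matrix.trace_smul,
    t1, t2, t3, t4, smul_eq_mul]
  field_simp
  ring
end

section
/- Determinant–diagonal likelihood bound: for any positive definite d×d matrix Σ and positive reals s_1,...,s_d, one has (n/2)·log det(Σ⁻¹) − (n/2)·∑_{i=1}^d s_i·(Σ⁻¹)_{ii} ≤ (n/2)·∑_{i=1}^d (−log s_i − 1). -/
open Matrix Real

/-- The trace of a real symmetric matrix is the sum of its eigenvalues. -/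
lemma trace_eq_sum_eigenvalues' {d : ℕ} {C : Matrix (Fin d) (Fin d) ℝ}
    (h : C.IsHermitian) : C.trace = ∑ i, h.eigenvalues i := by
  simpa using h.trace_eq_sum_eigenvalues

/-- `log det C ≤ tr C - d` for positive definite `C`. -/
lemma log_det_le_trace {d : ℕ} {C : Matrix (Fin d) (Fin d) ℝ} (hC : C.PosDef) :
    Real.log C.det ≤ C.trace - d := by
  have h := hC.isHermitian
  have hpos : ∀ i, 0 < h.eigenvalues i := hC.eigenvalues_pos
  have hdet : C.det = ∏ i, h.eigenvalues i := by
    simpa using h.det_eq_prod_eigenvalues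
  rw [hdet, trace_eq_sum_eigenvalues' h,
    Real.log_prod (fun i _ => (hpos i).ne')]
  have hcard : (d : ℝ) = ∑ _i : Fin d, (1 : ℝ) := by simp
  rw [hcard, ← Finset.sum_sub_distrib]
  exact Finset.sum_le_sum fun i _ => Real.log_le_sub_one_of_pos (hpos i)

/-- Determinant–diagonal likelihood bound: for positive definite `A` and
positive reals `s i`, `(n/2)·log det A⁻¹ − (n/2)·∑ s_i·(A⁻¹)_{ii}
≤ (n/2)·∑ (−log s_i − 1)`. -/
theorem det_diagonal_likelihood_bound (d : ℕ) (n : ℝ) (hn : 0 < n)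
    (A : Matrix (Fin d) (Fin d) ℝ) (hA : A.PosDef)
    (s : Fin d → ℝ) (hs : ∀ i, 0 < s i) :
    (n / 2) * Real.log (A⁻¹).det - (n / 2) * ∑ i, s i * A⁻¹ i i ≤
      (n / 2) * ∑ i, (-Real.log (s i) - 1) := by
  set B := A⁻¹ with hB
  have hBpd : B.PosDef := hA.inv
  set r : Fin d → ℝ := fun i => Real.sqrt (s i) with hr
  have hrpos : ∀ i, 0 < r i := fun i => Real.sqrt_pos.mpr (hs i)
  have hrsq : ∀ i, r i * r i = s i := fun i => Real.mul_self_sqrt (hs i).le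
  have hDH : (diagonal r)ᴴ = diagonal r := by
    simp [diagonal_conjTranspose]
  set C : Matrix (Fin d) (Fin d) ℝ := diagonal r * B * diagonal r with hC
  have hCpd : C.PosDef := by
    have key : ((diagonal r)ᴴ * B * diagonal r).PosDef := by
      refine PosDef.of_dotProduct_mulVec_pos (isHermitian_conjTranspose_mul_mul _ hBpd.isHermitian) fun x hx => ?_
      have hx' : diagonal r *ᵥ x ≠ 0 := by
        intro hzero
        apply hx
        funext i
        have := congrFun hzero i
        simp only [mulVec_diagonal, Pi.zero_apply] at this
        exact (mul_eq_zero.mp this).resolve_left (hrpos i).ne'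
      simpa only [star_mulVec, dotProduct_mulVec, vecMul_vecMul] using hBpd.dotProduct_mulVec_pos hx'
    rwa [hDH] at key
  have hCdet : C.det = (∏ i, s i) * B.det := by
    rw [hC, det_mul, det_mul, det_diagonal]
    rw [show (∏ i, r i) * B.det * ∏ i, r i = (∏ i, r i) * (∏ i, r i) * B.det by ring,
      ← Finset.prod_mul_distrib]
    simp_rw [hrsq]
  have hCdiag : ∀ i, C i i = s i * B i i := by
    intro i
    rw [hC, Matrix.mul_diagonal, Matrix.diagonal_mul,
      show r i * B i i * r i = r i * r i * B i i by ring, hrsq]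
  have hCtrace : C.trace = ∑ i, s i * B i i := by
    rw [Matrix.trace]
    exact Finset.sum_congr rfl fun i _ => hCdiag i
  have hkey : Real.log C.det ≤ C.trace - d := log_det_le_trace hCpd
  have hlogC : Real.log C.det = (∑ i, Real.log (s i)) + Real.log B.det := by
    rw [hCdet, Real.log_mul (Finset.prod_pos fun i _ => hs i).ne' hBpd.det_pos.ne', Real.log_prod]
    exact fun i _ => (hs i).ne'
  have hmain : Real.log B.det - ∑ i, s i * B i i ≤ ∑ i, (-Real.log (s i) - 1) := by
    have h1 : Real.log B.det = Real.log C.det - ∑ i, Real.log (s i) := by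
      rw [hlogC]; ring
    rw [h1, ← hCtrace]
    have h2 : (∑ i, (-Real.log (s i) - 1)) = -(∑ i, Real.log (s i)) - d := by
      rw [Finset.sum_sub_distrib, Finset.sum_neg_distrib]
      simp
    rw [h2]
    linarith
  have hn2 : 0 ≤ n / 2 := by linarith
  calc (n / 2) * Real.log B.det - (n / 2) * ∑ i, s i * B i i
      = (n / 2) * (Real.log B.det - ∑ i, s i * B i i) := by ring
    _ ≤ (n / 2) * ∑ i, (-Real.log (s i) - 1) := mul_le_mul_of_nonneg_left hmain hn2
end

section
/- Strict concavity of the QC objective in the precision variable: the function P ↦ (n/2)·log det(P) − (n/2)·tr(S P) − (1/4)·tr(P(Θ ∘ P)) is strictly concave on the cone of symmetric positive definite matrices P, provided Θ has nonnegative entries; consequently any critical point is the unique global maximizer. -/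
open Matrix Real

variable {d : ℕ}

lemma myPosDef_smul {P : Matrix (Fin d) (Fin d) ℝ} (hP : P.PosDef) {c : ℝ} (hc : 0 < c) :
    (c • P).PosDef := by
  refine PosDef.of_dotProduct_mulVec_pos ?_ (fun x hx => ?_)
  · unfold Matrix.IsHermitian
    rw [conjTranspose_smul, hP.isHermitian.eq, star_trivial]
  · rw [smul_mulVec, dotProduct_smul, smul_eq_mul]
    exact mul_pos hc (hP.dotProduct_mulVec_pos hx)

lemma myPosDef_conj {A B : Matrix (Fin d) (Fin d) ℝ} (hA : A.PosDef) (hB : B.IsHermitian)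
    (hBdet : B.det ≠ 0) : (B * A * B).PosDef := by
  refine PosDef.of_dotProduct_mulVec_pos ?_ (fun x hx => ?_)
  · have := isHermitian_conjTranspose_mul_mul B hA.isHermitian
    rwa [hB.eq] at this
  · have hBx : B *ᵥ x ≠ 0 := by
      intro h
      have : x = 0 := by
        have hu : IsUnit B.det := isUnit_iff_ne_zero.mpr hBdet
        have := Matrix.eq_zero_of_mulVec_eq_zero hBdet h
        exact this
      exact hx this
    have := hA.dotProduct_mulVec_pos hBx
    have hstar : star x ⬝ᵥ (B * A * B) *ᵥ x = star (B *ᵥ x) ⬝ᵥ A *ᵥ (B *ᵥ x) := by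
      rw [← mulVec_mulVec, ← mulVec_mulVec, star_mulVec, hB.eq, dotProduct_mulVec]
    rw [hstar]
    exact this

lemma logdet_core {P Q : Matrix (Fin d) (Fin d) ℝ} (hP : P.PosDef) (hQ : Q.PosDef)
    (hPQ : P ≠ Q) {a b : ℝ} (ha : 0 < a) (hb : 0 < b) (hab : a + b = 1) :
    a * Real.log P.det + b * Real.log Q.det < Real.log (a • P + b • Q).det := by
  have hPdet : P.det ≠ 0 := ne_of_gt hP.det_pos
  have hu : IsUnit P.det := isUnit_iff_ne_zero.mpr hPdet
  have hPinv : P⁻¹.PosDef := hP.inv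
  set R := (open scoped MatrixOrder in CFC.sqrt P⁻¹) with hRdef
  have hRps : R.PosSemidef := (open scoped MatrixOrder in (CFC.sqrt_nonneg P⁻¹).posSemidef)
  have hRH : R.IsHermitian := hRps.isHermitian
  have hRR : R * R = P⁻¹ := (open scoped MatrixOrder in CFC.sqrt_mul_sqrt_self P⁻¹ hPinv.posSemidef.nonneg)
  have detR2 : R.det * R.det = P.det⁻¹ := by
    rw [← det_mul, hRR, Matrix.det_nonsing_inv, Ring.inverse_eq_inv']
  have hRdet : R.det ≠ 0 := by
    intro h
    rw [h, mul_zero] at detR2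
    exact hPdet (by simpa using detR2.symm)
  -- R * P * R = 1
  have e1 : P * (R * R) = 1 := by rw [hRR, mul_nonsing_inv _ hu]
  have e2 : (R * R) * P = 1 := by rw [hRR, nonsing_inv_mul _ hu]
  have hRPR : R * P * R = 1 := by
    have hX : (R * P * R) * (R * P * R) = R * P * R := by
      have h1 : (R * P * R) * (R * P * R) = (R * P) * ((R * R) * (P * R)) := by
        simp only [Matrix.mul_assoc]
      rw [h1, ← Matrix.mul_assoc (R * R) P R, e2, Matrix.one_mul, Matrix.mul_assoc]
    have hXdet : IsUnit (R * P * R).det := by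
      rw [det_mul, det_mul]
      exact isUnit_iff_ne_zero.mpr (by
        simp only [ne_eq, mul_eq_zero, not_or]
        exact ⟨⟨hRdet, hPdet⟩, hRdet⟩)
    have hinv := mul_nonsing_inv _ hXdet
    calc R * P * R = (R * P * R) * ((R * P * R) * (R * P * R)⁻¹) := by
          rw [hinv, Matrix.mul_one]
      _ = ((R * P * R) * (R * P * R)) * (R * P * R)⁻¹ := by simp only [Matrix.mul_assoc]
      _ = (R * P * R) * (R * P * R)⁻¹ := by rw [hX]
      _ = 1 := hinv
  set M := R * Q * R with hMdef
  have hM : M.PosDef := myPosDef_conj hQ hRH hRdet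
  have hMH : M.IsHermitian := hM.isHermitian
  set lam := hMH.eigenvalues with hlam
  have hlampos : ∀ k, 0 < lam k := hM.eigenvalues_pos
  have detM : M.det = ∏ k, lam k := by simpa using hMH.det_eq_prod_eigenvalues
  set U : Matrix (Fin d) (Fin d) ℝ := (hMH.eigenvectorUnitary : Matrix (Fin d) (Fin d) ℝ) with hUdef
  have hU : U * star U = 1 := Matrix.mem_unitaryGroup_iff.mp hMH.eigenvectorUnitary.2
  have hdiag : diagonal (fun k => a + b * lam k)
      = a • (1 : Matrix (Fin d) (Fin d) ℝ) + b • diagonal lam := by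
    ext i j
    rcases eq_or_ne i j with rfl | h
    · simp [diagonal_apply_eq, Matrix.one_apply_eq]
    · simp [diagonal_apply_ne _ h, Matrix.one_apply_ne h]
  have key : a • (1 : Matrix (Fin d) (Fin d) ℝ) + b • M
      = U * diagonal (fun k => a + b * lam k) * star U := by
    have hcoe : diagonal (RCLike.ofReal ∘ lam) = diagonal lam := by
      congr 1
    calc a • (1 : Matrix (Fin d) (Fin d) ℝ) + b • M
        = a • (U * 1 * star U) + b • (U * diagonal lam * star U) := by
          rw [Matrix.mul_one, hU, ← hcoe]
          conv_lhs => rw [hMH.spectral_theorem, Unitary.conjStarAlgAut_apply]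
      _ = U * (a • (1 : Matrix (Fin d) (Fin d) ℝ) + b • diagonal lam) * star U := by
          rw [Matrix.mul_add, Matrix.add_mul, Matrix.mul_smul, Matrix.mul_smul,
            Matrix.smul_mul, Matrix.smul_mul]
      _ = U * diagonal (fun k => a + b * lam k) * star U := by rw [hdiag]
  have detkey : (a • (1 : Matrix (Fin d) (Fin d) ℝ) + b • M).det = ∏ k, (a + b * lam k) := by
    rw [key, det_mul_right_comm, hU, Matrix.one_mul, det_diagonal]
  have sandwich : R * (a • P + b • Q) * R = a • (1 : Matrix (Fin d) (Fin d) ℝ) + b • M := by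
    rw [Matrix.mul_add, Matrix.add_mul, Matrix.mul_smul, Matrix.mul_smul,
      Matrix.smul_mul, Matrix.smul_mul, hRPR, hMdef]
  have hdet : (a • P + b • Q).det = P.det * ∏ k, (a + b * lam k) := by
    have h5 : R.det * (a • P + b • Q).det * R.det = ∏ k, (a + b * lam k) := by
      rw [← det_mul, ← det_mul, sandwich, detkey]
    have h6 : (a • P + b • Q).det * P.det⁻¹ = ∏ k, (a + b * lam k) := by
      rw [← detR2, ← h5]; ring
    field_simp at h6
    linarith [h6]
  have hMdet : M.det ≠ 0 := ne_of_gt hM.det_pos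
  have hQdet : Q.det = P.det * M.det := by
    have h7 : M.det = Q.det * P.det⁻¹ := by
      rw [hMdef, det_mul, det_mul, ← detR2]; ring
    field_simp at h7
    linarith [h7]
  -- exists eigenvalue ≠ 1
  have hex : ∃ k, lam k ≠ 1 := by
    by_contra h
    push_neg at h
    have hM1 : M = 1 := by
      have hd1 : diagonal (RCLike.ofReal ∘ lam) = (1 : Matrix (Fin d) (Fin d) ℝ) := by
        have : (RCLike.ofReal ∘ lam : Fin d → ℝ) = fun _ => 1 := by
          funext k; simp [h k]
        rw [this, ← Matrix.diagonal_one]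
      rw [hMH.spectral_theorem, Unitary.conjStarAlgAut_apply, hd1, Matrix.mul_one, hU]
    apply hPQ
    have hQP : Q = P := by
      calc Q = (P * (R * R)) * Q * ((R * R) * P) := by
            rw [e1, e2, Matrix.one_mul, Matrix.mul_one]
        _ = (P * R) * (R * Q * R) * (R * P) := by simp only [Matrix.mul_assoc]
        _ = (P * R) * 1 * (R * P) := by rw [← hMdef, hM1]
        _ = (P * (R * R)) * P := by simp only [Matrix.mul_one, Matrix.mul_assoc]
        _ = P := by rw [e1, Matrix.one_mul]
    exact hQP.symm
  -- termwise inequalities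
  have hterm : ∀ k, b * Real.log (lam k) ≤ Real.log (a + b * lam k) := by
    intro k
    rcases eq_or_ne (lam k) 1 with h1 | h1
    · rw [h1, Real.log_one, mul_zero, mul_one, hab, Real.log_one]
    · have := strictConcaveOn_log_Ioi.2 (Set.mem_Ioi.mpr one_pos)
        (Set.mem_Ioi.mpr (hlampos k)) (Ne.symm h1) ha hb hab
      simp only [smul_eq_mul, Real.log_one, mul_zero, mul_one, zero_add] at this
      exact this.le
  have hstrict : ∀ k, lam k ≠ 1 → b * Real.log (lam k) < Real.log (a + b * lam k) := by
    intro k h1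
    have := strictConcaveOn_log_Ioi.2 (Set.mem_Ioi.mpr one_pos)
      (Set.mem_Ioi.mpr (hlampos k)) (Ne.symm h1) ha hb hab
    simpa only [smul_eq_mul, Real.log_one, mul_zero, mul_one, zero_add] using this
  have hsum : ∑ k, b * Real.log (lam k) < ∑ k, Real.log (a + b * lam k) := by
    obtain ⟨k, hk⟩ := hex
    exact Finset.sum_lt_sum (fun i _ => hterm i) ⟨k, Finset.mem_univ k, hstrict k hk⟩
  -- assemble the logs
  have habk : ∀ k, (0:ℝ) < a + b * lam k := fun k =>
    add_pos ha (mul_pos hb (hlampos k))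
  have hlogcombo : Real.log (a • P + b • Q).det
      = Real.log P.det + ∑ k, Real.log (a + b * lam k) := by
    rw [hdet, Real.log_mul hPdet (ne_of_gt (Finset.prod_pos fun k _ => habk k)),
      Real.log_prod]
    intro k _
    exact ne_of_gt (habk k)
  have hlogQ : Real.log Q.det = Real.log P.det + ∑ k, Real.log (lam k) := by
    rw [hQdet, Real.log_mul hPdet hMdet, detM, Real.log_prod]
    intro k _
    exact ne_of_gt (hlampos k)
  rw [hlogcombo, hlogQ]
  have expand : a * Real.log P.det + b * (Real.log P.det + ∑ k, Real.log (lam k))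
      = Real.log P.det + ∑ k, b * Real.log (lam k) := by
    rw [← Finset.mul_sum]
    have h8 : a * Real.log P.det + b * (Real.log P.det + ∑ k, Real.log (lam k))
        = (a + b) * Real.log P.det + b * ∑ k, Real.log (lam k) := by ring
    rw [h8, hab, one_mul]
  rw [expand]
  exact add_lt_add_right hsum _


/-- Strict concavity of the QC objective in the precision variable: the function
`P ↦ (n/2)·log det P − (n/2)·tr(S P) − (1/4)·tr(P(Θ ∘ P))` is strictly concave on
the cone of positive definite matrices when `Θ` has nonnegative entries, and
consequently it has at most one maximizer over this cone. -/
theorem qc_objective_strictly_concave (d : ℕ) (n : ℝ) (hn : 0 < n)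
    (S Θ : Matrix (Fin d) (Fin d) ℝ) (hSsymm : S.IsSymm) (hΘsymm : Θ.IsSymm)
    (hΘnonneg : ∀ i j, 0 ≤ Θ i j)
    (g : Matrix (Fin d) (Fin d) ℝ → ℝ)
    (hg : ∀ P : Matrix (Fin d) (Fin d) ℝ,
      g P = (n / 2) * Real.log P.det - (n / 2) * (S * P).trace
        - (1 / 4) * (P * Matrix.hadamard Θ P).trace) :
    StrictConcaveOn ℝ {P : Matrix (Fin d) (Fin d) ℝ | P.PosDef} g ∧
      ∀ P Q : Matrix (Fin d) (Fin d) ℝ, P.PosDef → Q.PosDef →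
        IsMaxOn g {P : Matrix (Fin d) (Fin d) ℝ | P.PosDef} P →
        IsMaxOn g {P : Matrix (Fin d) (Fin d) ℝ | P.PosDef} Q → P = Q := by
  have expand : ∀ A : Matrix (Fin d) (Fin d) ℝ,
      (A * Matrix.hadamard Θ A).trace = ∑ i, ∑ j, A i j * (Θ j i * A j i) := by
    intro A
    simp [Matrix.trace, Matrix.mul_apply, Matrix.diag, Matrix.hadamard_apply]
  have key : StrictConcaveOn ℝ {P : Matrix (Fin d) (Fin d) ℝ | P.PosDef} g := by
    constructor
    · intro x hx y hy a b ha hb hab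
      simp only [Set.mem_setOf_eq] at hx hy ⊢
      rcases ha.eq_or_lt with rfl | ha'
      · have hb1 : b = 1 := by linarith
        simpa [hb1] using hy
      rcases hb.eq_or_lt with rfl | hb'
      · have ha1 : a = 1 := by linarith
        simpa [ha1] using hx
      exact (myPosDef_smul hx ha').add (myPosDef_smul hy hb')
    · intro x hx y hy hxy a b ha hb hab
      simp only [Set.mem_setOf_eq] at hx hy
      have hsymm : ∀ (A : Matrix (Fin d) (Fin d) ℝ), A.PosDef → ∀ i j, A j i = A i j := by
        intro A hA i j
        calc A j i = star (A j i) := (star_trivial _).symm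
          _ = Aᴴ i j := (conjTranspose_apply A j i).symm
          _ = A i j := congrFun (congrFun hA.isHermitian.eq i) j
      have htr : (S * (a • x + b • y)).trace
          = a * (S * x).trace + b * (S * y).trace := by
        rw [Matrix.mul_add, Matrix.mul_smul, Matrix.mul_smul, trace_add,
          trace_smul, trace_smul, smul_eq_mul, smul_eq_mul]
      have hptwise : ∀ i j,
          (a • x + b • y) i j * (Θ j i * (a • x + b • y) j i)
            ≤ a * (x i j * (Θ j i * x j i)) + b * (y i j * (Θ j i * y j i)) := by
        intro i j
        have hθ : 0 ≤ Θ j i := hΘnonneg j i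
        simp only [Matrix.add_apply, Matrix.smul_apply, smul_eq_mul,
          hsymm x hx i j, hsymm y hy i j]
        have h9 : a * (x i j * (Θ j i * x i j)) + b * (y i j * (Θ j i * y i j))
            - (a * x i j + b * y i j) * (Θ j i * (a * x i j + b * y i j))
            = Θ j i * (a * b * (x i j - y i j) ^ 2) := by
          linear_combination (-(Θ j i) * (a * x i j ^ 2 + b * y i j ^ 2)) * hab
        linarith [h9, mul_nonneg hθ (mul_nonneg (mul_nonneg ha.le hb.le)
          (sq_nonneg (x i j - y i j)))]
      have hq : ((a • x + b • y) * Matrix.hadamard Θ (a • x + b • y)).trace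
          ≤ a * (x * Matrix.hadamard Θ x).trace + b * (y * Matrix.hadamard Θ y).trace := by
        rw [expand, expand, expand]
        calc (∑ i, ∑ j, (a • x + b • y) i j * (Θ j i * (a • x + b • y) j i))
            ≤ ∑ i, ∑ j, (a * (x i j * (Θ j i * x j i)) + b * (y i j * (Θ j i * y j i))) :=
              Finset.sum_le_sum fun i _ => Finset.sum_le_sum fun j _ => hptwise i j
          _ = a * (∑ i, ∑ j, x i j * (Θ j i * x j i))
              + b * (∑ i, ∑ j, y i j * (Θ j i * y j i)) := by
              simp [Finset.sum_add_distrib, Finset.mul_sum]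
      have hl := logdet_core hx hy hxy ha hb hab
      have hl2 := mul_lt_mul_of_pos_left hl (by positivity : (0:ℝ) < n / 2)
      simp only [smul_eq_mul, hg]
      rw [htr]
      nlinarith [hl2, hq]
  refine ⟨key, fun P Q hP hQ hmP hmQ => key.eq_of_isMaxOn hmP hmQ hP hQ⟩
end

section
/- Existence and uniqueness of the QC maximizer for strong penalization: assume the diagonal of the symmetric matrix S is strictly positive, and Θ = s·Θ_ref where Θ_ref has strictly positive off-diagonal entries and zero diagonal. Then for all sufficiently large s > 0, the function ℓ(Σ) = (n/2)·log det(Σ⁻¹) − (n/2)·tr(S Σ⁻¹) − (1/4)·tr(Σ⁻¹(Θ ∘ Σ⁻¹)) has a unique global maximizer over symmetric positive definite matrices Σ. -/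
open Matrix Real

section QCAux

variable {d : ℕ}

private lemma posDef_of_psd_det {K : Matrix (Fin d) (Fin d) ℝ} (hK : K.PosSemidef)
    (hdet : 0 < K.det) : K.PosDef := by
  refine (Matrix.posDef_iff_dotProduct_mulVec).mpr ⟨hK.1, fun x hx => ?_⟩
  rcases lt_or_eq_of_le (hK.dotProduct_mulVec_nonneg x) with h | h
  · exact h
  exfalso
  have hz : K *ᵥ x = 0 := (hK.dotProduct_mulVec_zero_iff x).mp h.symm
  have hxz : x = 0 := by
    have := congrArg (fun v => K⁻¹ *ᵥ v) hz
    simpa [Matrix.mulVec_mulVec, Matrix.nonsing_inv_mul K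
      (isUnit_iff_ne_zero.mpr hdet.ne'), Matrix.mulVec_zero] using this
  exact hx hxz

private lemma det_one_add_of_herm (N : Matrix (Fin d) (Fin d) ℝ) (hN : N.IsHermitian) :
    (1 + N).det = ∏ i, (1 + hN.eigenvalues i) := by
  set U : Matrix (Fin d) (Fin d) ℝ := (hN.eigenvectorUnitary : Matrix (Fin d) (Fin d) ℝ) with hUdef
  set D : Matrix (Fin d) (Fin d) ℝ := diagonal (RCLike.ofReal ∘ hN.eigenvalues) with hDdef
  have hU : U * star U = 1 := (Matrix.mem_unitaryGroup_iff).mp (hN.eigenvectorUnitary).2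
  have h1N : (1 + N) = U * (1 + D) * star U := by
    rw [Matrix.mul_add, Matrix.add_mul, mul_one, hU]
    conv_lhs => rw [hN.spectral_theorem]
    rfl
  have hdetU : U.det * (star U).det = 1 := by rw [← Matrix.det_mul, hU, Matrix.det_one]
  have hD : (1 + D).det = ∏ i, (1 + hN.eigenvalues i) := by
    rw [hDdef, ← Matrix.diagonal_one, Matrix.diagonal_add, Matrix.det_diagonal]
    simp
  calc (1 + N).det = U.det * (1 + D).det * (star U).det := by
        rw [h1N, Matrix.det_mul, Matrix.det_mul]
    _ = (1 + D).det * (U.det * (star U).det) := by ring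
    _ = ∏ i, (1 + hN.eigenvalues i) := by rw [hdetU, mul_one, hD]

private lemma eq_one_of_eigenvalues (N : Matrix (Fin d) (Fin d) ℝ) (hN : N.IsHermitian)
    (h : ∀ i, hN.eigenvalues i = 1) : N = 1 := by
  have hsp := hN.spectral_theorem
  have hd : diagonal (RCLike.ofReal ∘ hN.eigenvalues) = (1 : Matrix (Fin d) (Fin d) ℝ) := by
    ext i j
    by_cases h' : i = j <;> simp [Matrix.diagonal_apply, h, h', Matrix.one_apply]
  rw [hsp, hd, map_one]

open scoped MatrixOrder in
private lemma det_sq_midpoint_gt {K L : Matrix (Fin d) (Fin d) ℝ} (hK : K.PosDef) (hL : L.PosDef)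
    (hne : K ≠ L) : K.det * L.det < ((1/2 : ℝ) • (K + L)).det ^ 2 := by
  classical
  set R : Matrix (Fin d) (Fin d) ℝ := CFC.sqrt K with hRdef
  have hR : R.PosSemidef := Matrix.nonneg_iff_posSemidef.mp (CFC.sqrt_nonneg K)
  have hRR : R * R = K := CFC.sqrt_mul_sqrt_self K (Matrix.nonneg_iff_posSemidef.mpr hK.posSemidef)
  have hdetK : 0 < K.det := hK.det_pos
  have hdetR2 : R.det * R.det = K.det := by rw [← Matrix.det_mul, hRR]
  have hdetRne : R.det ≠ 0 := by
    intro h; rw [h, zero_mul] at hdetR2; exact hdetK.ne hdetR2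
  have hRu : IsUnit R.det := isUnit_iff_ne_zero.mpr hdetRne
  have hRinvH : (R⁻¹).IsHermitian := by
    rw [Matrix.IsHermitian, Matrix.conjTranspose_nonsing_inv, hR.1.eq]
  set N : Matrix (Fin d) (Fin d) ℝ := R⁻¹ * L * R⁻¹ with hNdef
  have hNpsd : N.PosSemidef := by
    have := hL.posSemidef.conjTranspose_mul_mul_same (B := R⁻¹)
    rwa [hRinvH.eq] at this
  have hdetRinv : R⁻¹.det ≠ 0 := by
    rw [Matrix.det_nonsing_inv]
    simpa using hdetRne
  have hdetN : 0 < N.det := by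
    rw [hNdef, Matrix.det_mul, Matrix.det_mul]
    have h1 : 0 < R⁻¹.det * R⁻¹.det := by
      rcases hdetRinv.lt_or_gt with h | h
      · exact mul_pos_of_neg_of_neg h h
      · exact mul_pos h h
    nlinarith [hL.det_pos]
  have hNpd : N.PosDef := posDef_of_psd_det hNpsd hdetN
  have hLRNR : L = R * N * R := by
    rw [hNdef]
    calc L = (R * R⁻¹) * L * (R⁻¹ * R) := by
          rw [Matrix.mul_nonsing_inv R hRu, Matrix.nonsing_inv_mul R hRu, one_mul, mul_one]
      _ = R * (R⁻¹ * L * R⁻¹) * R := by noncomm_ring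
  have hKL : K + L = R * (1 + N) * R := by
    rw [Matrix.mul_add, mul_one, Matrix.add_mul, hRR, ← hLRNR]
  set μ := hNpd.isHermitian.eigenvalues with hμdef
  have hμpos : ∀ i, 0 < μ i := hNpd.eigenvalues_pos
  have hdetNμ : N.det = ∏ i, μ i := by
    have := hNpd.isHermitian.det_eq_prod_eigenvalues
    simpa using this
  have hdet1N : (1 + N).det = ∏ i, (1 + μ i) := det_one_add_of_herm N hNpd.isHermitian
  have hNe1 : ¬ (∀ i, μ i = 1) := by
    intro hall
    exact hne (by rw [← hRR, hLRNR, eq_one_of_eigenvalues N hNpd.isHermitian hall, mul_one])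
  push_neg at hNe1
  obtain ⟨i₀, hi₀⟩ := hNe1
  have hdetmid : ((1/2 : ℝ) • (K + L)).det = R.det * R.det * ∏ i, ((1 + μ i)/2) := by
    rw [Matrix.det_smul, hKL, Matrix.det_mul, Matrix.det_mul, hdet1N]
    rw [Fintype.card_fin]
    rw [Finset.prod_div_distrib]
    simp only [Finset.prod_const, Finset.card_univ, Fintype.card_fin]
    field_simp
    have h2 : (1/2 : ℝ) ^ d * 2 ^ d = 1 := by rw [← mul_pow]; norm_num
    linear_combination (∏ x, (1 + μ x)) * h2
  have hprodlt : (∏ i, μ i) < ∏ i, ((1 + μ i)/2)^2 := by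
    apply Finset.prod_lt_prod (fun i _ => hμpos i)
      (fun i _ => by nlinarith [sq_nonneg (1 - μ i), hμpos i])
    exact ⟨i₀, Finset.mem_univ i₀,
      by nlinarith [mul_self_pos.mpr (sub_ne_zero.mpr (Ne.symm hi₀)), hμpos i₀]⟩
  calc K.det * L.det = (R.det * R.det)^2 * ∏ i, μ i := by
        rw [hLRNR, Matrix.det_mul, Matrix.det_mul, hdetNμ, ← hdetR2]; ring
    _ < (R.det * R.det)^2 * ∏ i, ((1 + μ i)/2)^2 := by
        apply mul_lt_mul_of_pos_left hprodlt
        positivity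
    _ = ((1/2 : ℝ) • (K + L)).det ^ 2 := by
        rw [hdetmid, Finset.prod_pow]
        ring

private lemma posdef_diag_pos {K : Matrix (Fin d) (Fin d) ℝ} (hK : K.PosDef) (i : Fin d) :
    0 < K i i := by
  have h := hK.dotProduct_mulVec_pos (x := Pi.single i 1) (by simp [Pi.single_eq_same, funext_iff]; exact ⟨i, by simp⟩)
  simpa [Matrix.mulVec_single, single_dotProduct] using h

private lemma posdef_entry_sq {K : Matrix (Fin d) (Fin d) ℝ} (hK : K.PosDef) (i j : Fin d) :
    (K i j)^2 ≤ K i i * K j j := by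
  rcases eq_or_ne i j with rfl | hij
  · have := posdef_diag_pos hK i; nlinarith
  have hsymm : K j i = K i j := by
    have := hK.isHermitian.apply i j
    simpa using this
  set x : Fin d → ℝ := Pi.single i (K j j) + Pi.single j (-(K i j)) with hx
  have h := hK.posSemidef.dotProduct_mulVec_nonneg x
  have hq : star x ⬝ᵥ K *ᵥ x
      = K j j * (K i i * K j j) - K j j * (K i j)^2 - (K i j)^2 * K j j + (K i j)^2 * K j j := by
    rw [hx]
    simp [Matrix.mulVec_add, Matrix.mulVec_single, dotProduct_add,
      add_dotProduct, single_dotProduct, star_trivial, hsymm]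
    ring
  rw [hq] at h
  have hjj := posdef_diag_pos hK j
  nlinarith

private lemma posdef_diag_le_trace {K : Matrix (Fin d) (Fin d) ℝ} (hK : K.PosDef) (i : Fin d) :
    K i i ≤ K.trace := by
  have h : K.trace = ∑ j, K j j := rfl
  rw [h]
  exact Finset.single_le_sum (fun j _ => (posdef_diag_pos hK j).le) (Finset.mem_univ i)

private lemma posdef_smul {K : Matrix (Fin d) (Fin d) ℝ} (hK : K.PosDef) {c : ℝ} (hc : 0 < c) :
    (c • K).PosDef := by
  refine Matrix.posDef_iff_dotProduct_mulVec.mpr ⟨?_, ?_⟩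
  · rw [Matrix.IsHermitian, Matrix.conjTranspose_smul, hK.isHermitian.eq]; simp
  · intro x hx
    have := hK.dotProduct_mulVec_pos hx
    rw [Matrix.smul_mulVec, dotProduct_smul]
    exact mul_pos hc this

private lemma trace_mul_eq (S K : Matrix (Fin d) (Fin d) ℝ) :
    (S * K).trace = ∑ i, ∑ j, S i j * K j i := by
  simp [Matrix.trace, Matrix.diag, Matrix.mul_apply]

private lemma trace_hadamard_eq (Θref K : Matrix (Fin d) (Fin d) ℝ) (hΘ : Θref.IsSymm)
    (hK : K.IsHermitian) (s : ℝ) :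
    (K * Matrix.hadamard (s • Θref) K).trace = s * ∑ i, ∑ j, Θref i j * (K i j)^2 := by
  rw [trace_mul_eq]
  rw [Finset.mul_sum]
  refine Finset.sum_congr rfl fun i _ => ?_
  rw [Finset.mul_sum]
  refine Finset.sum_congr rfl fun j _ => ?_
  have hk : K j i = K i j := by simpa using hK.apply i j
  have hθ : Θref j i = Θref i j := hΘ.apply i j
  simp [Matrix.hadamard_apply, Matrix.smul_apply, hk, hθ]
  ring

private lemma scalar_coercive (c : ℝ) (hc : 0 < c) (d : ℕ) (C : ℝ) :
    ∃ b : ℝ, 1 ≤ b ∧ ∀ T : ℝ, 0 < T → C ≤ (d : ℝ) * Real.log T - c * T → T ≤ b := by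
  set M : ℝ := 2 * d / c + 1 with hM
  have hMpos : 0 < M := by positivity
  refine ⟨max 1 ((2/c) * ((d : ℝ) * (Real.log M - 1) - C)), le_max_left _ _, fun T hT h => ?_⟩
  have hlog : Real.log T ≤ T / M - 1 + Real.log M := by
    have h1 : Real.log (T / M) ≤ T / M - 1 := Real.log_le_sub_one_of_pos (by positivity)
    have h2 : Real.log (T / M) = Real.log T - Real.log M := Real.log_div hT.ne' hMpos.ne'
    linarith
  have hdM : (d : ℝ) / M ≤ c / 2 := by
    rw [div_le_iff₀ hMpos, hM]
    have he : c / 2 * (2 * (d:ℝ) / c + 1) = (d:ℝ) + c / 2 := by field_simp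
    rw [he]
    linarith
  have hkey : C ≤ -(c/2) * T + (d : ℝ) * (Real.log M - 1) := by
    have hd0 : (0:ℝ) ≤ d := Nat.cast_nonneg d
    have h3 : (d : ℝ) * Real.log T ≤ (d : ℝ) * (T / M - 1 + Real.log M) :=
      mul_le_mul_of_nonneg_left hlog hd0
    have hTM : (d : ℝ) * (T / M) ≤ (c/2) * T := by
      have := mul_le_mul_of_nonneg_right hdM hT.le
      calc (d : ℝ) * (T / M) = ((d:ℝ)/M) * T := by ring
        _ ≤ (c/2) * T := by nlinarith
    nlinarith
  have hT2 : (c/2) * T ≤ (d : ℝ) * (Real.log M - 1) - C := by linarith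
  have : T ≤ (2/c) * ((d : ℝ) * (Real.log M - 1) - C) := by
    calc T = (2/c) * ((c/2) * T) := by field_simp
      _ ≤ (2/c) * ((d : ℝ) * (Real.log M - 1) - C) :=
        mul_le_mul_of_nonneg_left hT2 (by positivity)
  exact le_max_of_le_right this

private lemma psd_det_le_trace_pow {K : Matrix (Fin d) (Fin d) ℝ} (hK : K.PosSemidef) :
    K.det ≤ K.trace ^ d := by
  have htr : K.trace = ∑ i, hK.1.eigenvalues i := by
    conv_lhs => rw [hK.1.spectral_theorem]
    rw [Unitary.conjStarAlgAut_apply, Matrix.trace_mul_cycle, (Matrix.mem_unitaryGroup_iff').mp (hK.1.eigenvectorUnitary).2]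
    simp [Matrix.trace_diagonal]
  have hdet : K.det = ∏ i, hK.1.eigenvalues i := by simpa using hK.1.det_eq_prod_eigenvalues
  have hnn : ∀ i, 0 ≤ hK.1.eigenvalues i := hK.eigenvalues_nonneg
  have hle : ∀ i : Fin d, hK.1.eigenvalues i ≤ K.trace := by
    intro i
    rw [htr]
    exact Finset.single_le_sum (fun j _ => hnn j) (Finset.mem_univ i)
  calc K.det = ∏ i, hK.1.eigenvalues i := hdet
    _ ≤ ∏ _i : Fin d, K.trace := Finset.prod_le_prod (fun i _ => hnn i) (fun i _ => hle i)
    _ = K.trace ^ d := by simp [Finset.prod_const]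

private lemma compact_T (b δ : ℝ) :
    IsCompact {K : Matrix (Fin d) (Fin d) ℝ |
      K.PosSemidef ∧ (∀ i j, |K i j| ≤ b) ∧ δ ≤ K.det} := by
  have hbox : IsCompact {K : Matrix (Fin d) (Fin d) ℝ | ∀ i j, K i j ∈ Set.Icc (-b) b} := by
    have e : {K : Matrix (Fin d) (Fin d) ℝ | ∀ i j, K i j ∈ Set.Icc (-b) b}
        = Set.pi Set.univ (fun _i : Fin d => Set.pi Set.univ (fun _j : Fin d => Set.Icc (-b) b)) := by
      ext K
      constructor
      · intro h
        intro i _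
        intro j _
        exact Set.mem_Icc.mpr (h i j)
      · intro h i j
        exact Set.mem_Icc.mp (h i (Set.mem_univ i) j (Set.mem_univ j))
    rw [e]
    exact isCompact_univ_pi fun i => isCompact_univ_pi fun j => isCompact_Icc
  apply hbox.of_isClosed_subset
  · have h1 : IsClosed {K : Matrix (Fin d) (Fin d) ℝ | K.PosSemidef} := by
      have e : {K : Matrix (Fin d) (Fin d) ℝ | K.PosSemidef}
          = {K : Matrix (Fin d) (Fin d) ℝ | Kᴴ = K} ∩
            ⋂ x : Fin d → ℝ, {K | 0 ≤ star x ⬝ᵥ K *ᵥ x} := by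
        ext K
        simp [Matrix.posSemidef_iff_dotProduct_mulVec, Matrix.IsHermitian, Set.mem_iInter]
      rw [e]
      refine IsClosed.inter (isClosed_eq ?_ continuous_id) (isClosed_iInter fun x => ?_)
      · exact continuous_id.matrix_conjTranspose
      · exact isClosed_le continuous_const
          (Continuous.dotProduct continuous_const
            (continuous_id.matrix_mulVec continuous_const))
    have h2 : IsClosed {K : Matrix (Fin d) (Fin d) ℝ | ∀ i j, |K i j| ≤ b} := by
      have e : {K : Matrix (Fin d) (Fin d) ℝ | ∀ i j, |K i j| ≤ b}
          = ⋂ i, ⋂ j, {K : Matrix (Fin d) (Fin d) ℝ | |K i j| ≤ b} := by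
        ext K; simp [Set.mem_iInter]
      rw [e]
      exact isClosed_iInter fun i => isClosed_iInter fun j =>
        isClosed_le (continuous_abs.comp (continuous_id.matrix_elem i j)) continuous_const
    have h3 : IsClosed {K : Matrix (Fin d) (Fin d) ℝ | δ ≤ K.det} :=
      isClosed_le continuous_const continuous_id.matrix_det
    have e : {K : Matrix (Fin d) (Fin d) ℝ | K.PosSemidef ∧ (∀ i j, |K i j| ≤ b) ∧ δ ≤ K.det}
        = {K : Matrix (Fin d) (Fin d) ℝ | K.PosSemidef}
          ∩ ({K | ∀ i j, |K i j| ≤ b} ∩ {K | δ ≤ K.det}) := by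
      ext K; exact ⟨fun h => ⟨h.1, h.2.1, h.2.2⟩, fun h => ⟨h.1, h.2.1, h.2.2⟩⟩
    rw [e]
    exact h1.inter (h2.inter h3)
  · intro K hK i j
    rw [Set.mem_Icc]
    exact abs_le.mp (hK.2.1 i j)

end QCAux

/-- The objective in precision-matrix coordinates. -/
private noncomputable def qcF (d : ℕ) (n : ℝ) (S Θref : Matrix (Fin d) (Fin d) ℝ) (s : ℝ)
    (K : Matrix (Fin d) (Fin d) ℝ) : ℝ :=
  n / 2 * Real.log K.det - n / 2 * (S * K).trace
    - 1 / 4 * (K * Matrix.hadamard (s • Θref) K).trace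

section QCMain

variable {d : ℕ} {n : ℝ} {S Θref : Matrix (Fin d) (Fin d) ℝ}

private lemma qcF_eq (hΘ : Θref.IsSymm) (s : ℝ) {K : Matrix (Fin d) (Fin d) ℝ}
    (hK : K.IsHermitian) :
    qcF d n S Θref s K = n / 2 * Real.log K.det - n / 2 * (∑ i, ∑ j, S i j * K i j)
      - s / 4 * (∑ i, ∑ j, Θref i j * (K i j)^2) := by
  rw [qcF, trace_hadamard_eq Θref K hΘ hK s, trace_mul_eq]
  have h : ∀ i j : Fin d, S i j * K j i = S i j * K i j := by
    intro i j
    have hk : K j i = K i j := by simpa using hK.apply i j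
    rw [hk]
  rw [Finset.sum_congr rfl fun i _ => Finset.sum_congr rfl fun j _ => h i j]
  ring

private lemma qcF_one (hΘ : Θref.IsSymm) (hΘdiag : ∀ i, Θref i i = 0) (s : ℝ) :
    qcF d n S Θref s 1 = -(n / 2) * S.trace := by
  rw [qcF_eq hΘ s Matrix.isHermitian_one]
  have h1 : ∀ i j : Fin d, S i j * (1 : Matrix (Fin d) (Fin d) ℝ) i j
      = if i = j then S i i else 0 := by
    intro i j
    by_cases h : i = j <;> simp [Matrix.one_apply, h]
  have h2 : ∀ i j : Fin d, Θref i j * ((1 : Matrix (Fin d) (Fin d) ℝ) i j)^2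
      = 0 := by
    intro i j
    by_cases h : i = j
    · subst h; simp [Matrix.one_apply, hΘdiag i]
    · simp [Matrix.one_apply, h]
  rw [Finset.sum_congr rfl fun i _ => Finset.sum_congr rfl fun j _ => h1 i j]
  rw [Finset.sum_congr rfl fun i _ => Finset.sum_congr rfl fun j _ => h2 i j]
  simp [Matrix.trace, Matrix.diag, Finset.sum_ite_eq]

set_option maxHeartbeats 1000000 in
private lemma qcF_superlevel (hd : 0 < d) (hn : 0 < n)
    (hSdiag : ∀ i, 0 < S i i) (hΘsymm : Θref.IsSymm)
    (hΘoff : ∀ i j, i ≠ j → 0 < Θref i j) (hΘdiag : ∀ i, Θref i i = 0) :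
    ∃ b δ : ℝ, 1 ≤ b ∧ 0 < δ ∧ δ ≤ 1 ∧ ∀ s : ℝ, 1 ≤ s → ∀ K : Matrix (Fin d) (Fin d) ℝ,
      K.PosDef → qcF d n S Θref s 1 ≤ qcF d n S Θref s K →
      (∀ i j, |K i j| ≤ b) ∧ δ ≤ K.det := by
  classical
  haveI : Nonempty (Fin d) := Fin.pos_iff_nonempty.mp hd
  set c : ℝ := Finset.univ.inf' Finset.univ_nonempty (fun i => S i i) with hcdef
  have hc : 0 < c := by
    rw [hcdef, Finset.lt_inf'_iff]
    exact fun i _ => hSdiag i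
  have hci : ∀ i, c ≤ S i i := fun i => Finset.inf'_le _ (Finset.mem_univ i)
  set C₁ : ℝ := ∑ i, ∑ j, (if i = j then 0 else (n * S i j)^2 / (4 * Θref i j)) with hC₁def
  set v0 : ℝ := -(n / 2) * S.trace with hv0def
  set C₂ : ℝ := (v0 - C₁) * (2 / n) with hC₂def
  obtain ⟨b, hb1, hb⟩ := scalar_coercive c hc d C₂
  set SB : ℝ := ∑ i, ∑ j, |S i j| with hSBdef
  set C₃ : ℝ := (v0 - n / 2 * (SB * b)) * (2 / n) with hC₃def
  refine ⟨b, min (Real.exp C₃) 1, hb1, lt_min (Real.exp_pos _) one_pos, min_le_right _ _,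
    fun s hs K hKpd hlev => ?_⟩
  have hs0 : (0:ℝ) < s := lt_of_lt_of_le one_pos hs
  have hKh : K.IsHermitian := hKpd.isHermitian
  have hTpos : 0 < K.trace := by
    have h : K.trace = ∑ j, K j j := rfl
    rw [h]
    exact Finset.sum_pos (fun j _ => posdef_diag_pos hKpd j) Finset.univ_nonempty
  set T : ℝ := K.trace with hTdef
  -- the fundamental termwise estimate
  have hsum : n / 2 * c * T ≤ n / 2 * (∑ i, ∑ j, S i j * K i j)
      + s / 4 * (∑ i, ∑ j, Θref i j * (K i j)^2) + C₁ := by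
    have hTsum : n / 2 * c * T = ∑ i, ∑ j,
        (if i = j then n / 2 * c * K i i else 0) := by
      have h1 : ∀ i : Fin d, (∑ j, if i = j then n / 2 * c * K i i else 0)
          = n / 2 * c * K i i := by
        intro i
        rw [Finset.sum_ite_eq]
        simp
      rw [Finset.sum_congr rfl fun i _ => h1 i]
      rw [hTdef]
      have h : K.trace = ∑ i, K i i := rfl
      rw [h, Finset.mul_sum]
    have hRHS : n / 2 * (∑ i, ∑ j, S i j * K i j)
        + s / 4 * (∑ i, ∑ j, Θref i j * (K i j)^2) + C₁
        = ∑ i, ∑ j, (n / 2 * (S i j * K i j) + s / 4 * (Θref i j * (K i j)^2)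
            + (if i = j then 0 else (n * S i j)^2 / (4 * Θref i j))) := by
      rw [hC₁def, Finset.mul_sum, Finset.mul_sum]
      rw [← Finset.sum_add_distrib, ← Finset.sum_add_distrib]
      refine Finset.sum_congr rfl fun i _ => ?_
      rw [Finset.mul_sum, Finset.mul_sum, ← Finset.sum_add_distrib, ← Finset.sum_add_distrib]
    rw [hTsum, hRHS]
    refine Finset.sum_le_sum fun i _ => Finset.sum_le_sum fun j _ => ?_
    by_cases hij : i = j
    · subst hij
      have hθ0 := hΘdiag i
      have hKi := posdef_diag_pos hKpd i
      have hSi := hci i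
      rw [hθ0, if_pos rfl, if_pos rfl]
      have hkey : n / 2 * c * K i i ≤ n / 2 * (S i i * K i i) := by
        have := mul_le_mul_of_nonneg_right hSi hKi.le
        have hn2 : (0:ℝ) ≤ n / 2 := by linarith
        calc n / 2 * c * K i i = n / 2 * (c * K i i) := by ring
          _ ≤ n / 2 * (S i i * K i i) := mul_le_mul_of_nonneg_left this hn2
      nlinarith [sq_nonneg (K i i)]
    · simp only [if_neg hij]
      have hθ : 0 < Θref i j := hΘoff i j hij
      have hkey : -(n / 2 * (S i j * K i j) + s / 4 * (Θref i j * (K i j)^2))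
          ≤ (n * S i j)^2 / (4 * Θref i j) := by
        rw [le_div_iff₀ (by positivity)]
        have h1 : 0 ≤ (s - 1) * (Θref i j * K i j)^2 :=
          mul_nonneg (by linarith) (sq_nonneg _)
        nlinarith [sq_nonneg (Θref i j * K i j + n * S i j)]
      linarith
  have hKeq := qcF_eq (n := n) (S := S) hΘsymm s hKh
  have h1eq := qcF_one (n := n) (S := S) hΘsymm hΘdiag s
  -- trace bound
  have hTb : T ≤ b := by
    apply hb T hTpos
    have hlogdet : Real.log K.det ≤ (d : ℝ) * Real.log T := by
      have hdetpos := hKpd.det_pos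
      have h1 : K.det ≤ T ^ d := psd_det_le_trace_pow hKpd.posSemidef
      calc Real.log K.det ≤ Real.log (T ^ d) := Real.log_le_log hdetpos h1
        _ = (d : ℝ) * Real.log T := by rw [Real.log_pow]
    have hup : v0 ≤ n / 2 * ((d : ℝ) * Real.log T - c * T) + C₁ := by
      have := hlev
      rw [hKeq, h1eq] at this
      have hn2 : (0:ℝ) ≤ n / 2 := by linarith
      have h2 : n / 2 * Real.log K.det ≤ n / 2 * ((d:ℝ) * Real.log T) :=
        mul_le_mul_of_nonneg_left hlogdet hn2
      rw [hv0def]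
      nlinarith [hsum]
    rw [hC₂def]
    have h3 : v0 - C₁ ≤ n / 2 * ((d : ℝ) * Real.log T - c * T) := by linarith
    calc (v0 - C₁) * (2 / n) ≤ (n / 2 * ((d : ℝ) * Real.log T - c * T)) * (2 / n) :=
          mul_le_mul_of_nonneg_right h3 (by positivity)
      _ = (d : ℝ) * Real.log T - c * T := by field_simp
  -- entry bound
  have hentry : ∀ i j, |K i j| ≤ b := by
    intro i j
    have h1 : (K i j)^2 ≤ K i i * K j j := posdef_entry_sq hKpd i j
    have h2 : K i i ≤ T := posdef_diag_le_trace hKpd i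
    have h3 : K j j ≤ T := posdef_diag_le_trace hKpd j
    have h4 : (K i j)^2 ≤ b^2 := by nlinarith [posdef_diag_pos hKpd i, posdef_diag_pos hKpd j]
    rw [abs_le]
    constructor <;> nlinarith
  refine ⟨hentry, le_trans (min_le_left _ _) ?_⟩
  -- determinant lower bound
  have hQ : 0 ≤ ∑ i, ∑ j, Θref i j * (K i j)^2 := by
    refine Finset.sum_nonneg fun i _ => Finset.sum_nonneg fun j _ => ?_
    rcases eq_or_ne i j with rfl | hij
    · rw [hΘdiag i]; simp
    · exact mul_nonneg (hΘoff i j hij).le (sq_nonneg _)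
  have hSK : -(SB * b) ≤ ∑ i, ∑ j, S i j * K i j := by
    have : ∀ i j : Fin d, -(|S i j| * b) ≤ S i j * K i j := by
      intro i j
      have h1 : |S i j * K i j| ≤ |S i j| * b := by
        rw [abs_mul]
        exact mul_le_mul_of_nonneg_left (hentry i j) (abs_nonneg _)
      have := neg_abs_le (S i j * K i j)
      linarith
    have hSBb : SB * b = ∑ i, ∑ j, |S i j| * b := by
      rw [hSBdef, Finset.sum_mul]
      exact Finset.sum_congr rfl fun i _ => Finset.sum_mul _ _ _
    calc -(SB * b) = ∑ i, ∑ j, -(|S i j| * b) := by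
          rw [hSBb]
          simp
      _ ≤ ∑ i, ∑ j, S i j * K i j :=
          Finset.sum_le_sum fun i _ => Finset.sum_le_sum fun j _ => this i j
  have hlogC₃ : C₃ ≤ Real.log K.det := by
    have hlev' := hlev
    rw [hKeq, h1eq] at hlev'
    have h5 : 0 ≤ s / 4 * (∑ i, ∑ j, Θref i j * (K i j)^2) :=
      mul_nonneg (by linarith) hQ
    have h6 : n / 2 * (-(SB * b)) ≤ n / 2 * (∑ i, ∑ j, S i j * K i j) :=
      mul_le_mul_of_nonneg_left hSK (by linarith)
    have h7 : v0 - n / 2 * (SB * b) ≤ n / 2 * Real.log K.det := by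
      rw [hv0def]; nlinarith
    rw [hC₃def]
    calc (v0 - n / 2 * (SB * b)) * (2 / n) ≤ (n / 2 * Real.log K.det) * (2 / n) :=
          mul_le_mul_of_nonneg_right h7 (by positivity)
      _ = Real.log K.det := by field_simp
  calc Real.exp C₃ ≤ Real.exp (Real.log K.det) := Real.exp_le_exp.mpr hlogC₃
    _ = K.det := Real.exp_log hKpd.det_pos

set_option maxHeartbeats 1000000 in
private lemma qcF_exists_max (hd : 0 < d) (hn : 0 < n)
    (hSdiag : ∀ i, 0 < S i i) (hΘsymm : Θref.IsSymm)
    (hΘoff : ∀ i j, i ≠ j → 0 < Θref i j) (hΘdiag : ∀ i, Θref i i = 0)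
    (s : ℝ) (hs : 1 ≤ s) :
    ∃ K : Matrix (Fin d) (Fin d) ℝ, K.PosDef ∧
      ∀ L : Matrix (Fin d) (Fin d) ℝ, L.PosDef → qcF d n S Θref s L ≤ qcF d n S Θref s K := by
  classical
  obtain ⟨b, δ, hb1, hδ0, hδ1, hsuper⟩ := qcF_superlevel (n := n) (S := S) (Θref := Θref)
    hd hn hSdiag hΘsymm hΘoff hΘdiag
  set Tset : Set (Matrix (Fin d) (Fin d) ℝ) :=
    {K | K.PosSemidef ∧ (∀ i j, |K i j| ≤ b) ∧ δ ≤ K.det} with hTsetdef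
  have hcomp : IsCompact Tset := compact_T b δ
  have h1mem : (1 : Matrix (Fin d) (Fin d) ℝ) ∈ Tset := by
    refine ⟨Matrix.PosSemidef.one, fun i j => ?_, by rw [Matrix.det_one]; exact hδ1⟩
    by_cases h : i = j <;> simp [Matrix.one_apply, h] <;> linarith
  have hcont : ContinuousOn (qcF d n S Θref s) Tset := by
    intro K hK
    apply ContinuousAt.continuousWithinAt
    have hdet : K.det ≠ 0 := by
      have := hK.2.2
      exact ne_of_gt (lt_of_lt_of_le hδ0 this)
    have hlog : ContinuousAt (fun K : Matrix (Fin d) (Fin d) ℝ => Real.log K.det) K :=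
      (Real.continuousAt_log hdet).comp (continuous_id.matrix_det.continuousAt)
    have htr1 : Continuous (fun K : Matrix (Fin d) (Fin d) ℝ => (S * K).trace) :=
      (continuous_const.matrix_mul continuous_id).matrix_trace
    have htr2 : Continuous (fun K : Matrix (Fin d) (Fin d) ℝ =>
        (K * Matrix.hadamard (s • Θref) K).trace) := by
      refine Continuous.matrix_trace (continuous_id.matrix_mul ?_)
      exact continuous_matrix fun i j => continuous_const.mul (continuous_id.matrix_elem i j)
    exact ((hlog.const_mul (n / 2)).sub (htr1.continuousAt.const_mul (n / 2))).sub
      (htr2.continuousAt.const_mul (1 / 4))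
  obtain ⟨K, hKmem, hKmax⟩ := hcomp.exists_isMaxOn ⟨1, h1mem⟩ hcont
  have hKpd : K.PosDef := posDef_of_psd_det hKmem.1 (lt_of_lt_of_le hδ0 hKmem.2.2)
  refine ⟨K, hKpd, fun L hL => ?_⟩
  by_cases hcase : qcF d n S Θref s 1 ≤ qcF d n S Θref s L
  · have hLsub := hsuper s hs L hL hcase
    exact hKmax ⟨hL.posSemidef, hLsub.1, hLsub.2⟩
  · push_neg at hcase
    have h1K : qcF d n S Θref s 1 ≤ qcF d n S Θref s K := hKmax h1mem
    linarith

set_option maxHeartbeats 1000000 in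
private lemma qcF_max_unique (hn : 0 < n)
    (hΘsymm : Θref.IsSymm)
    (hΘoff : ∀ i j, i ≠ j → 0 < Θref i j) (hΘdiag : ∀ i, Θref i i = 0)
    (s : ℝ) (hs : 1 ≤ s) {K L : Matrix (Fin d) (Fin d) ℝ}
    (hKpd : K.PosDef) (hLpd : L.PosDef)
    (hKmax : ∀ B : Matrix (Fin d) (Fin d) ℝ, B.PosDef → qcF d n S Θref s B ≤ qcF d n S Θref s K)
    (hLmax : ∀ B : Matrix (Fin d) (Fin d) ℝ, B.PosDef → qcF d n S Θref s B ≤ qcF d n S Θref s L) :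
    K = L := by
  by_contra hne
  have hs0 : (0:ℝ) < s := lt_of_lt_of_le one_pos hs
  set M₀ : Matrix (Fin d) (Fin d) ℝ := (1/2 : ℝ) • (K + L) with hM₀def
  have hM₀pd : M₀.PosDef := posdef_smul (hKpd.add hLpd) (by norm_num)
  have hval : qcF d n S Θref s K = qcF d n S Θref s L :=
    le_antisymm (hLmax K hKpd) (hKmax L hLpd)
  -- strict log-det inequality
  have hdetlt : K.det * L.det < M₀.det ^ 2 := det_sq_midpoint_gt hKpd hLpd hne
  have hlog : Real.log K.det + Real.log L.det < 2 * Real.log M₀.det := by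
    have h1 : Real.log (K.det * L.det) < Real.log (M₀.det ^ 2) :=
      Real.log_lt_log (mul_pos hKpd.det_pos hLpd.det_pos) hdetlt
    rwa [Real.log_mul hKpd.det_pos.ne' hLpd.det_pos.ne', Real.log_pow,
      Nat.cast_ofNat] at h1
  -- trace linearity
  have htr : (S * M₀).trace = (1/2 : ℝ) * ((S * K).trace + (S * L).trace) := by
    rw [hM₀def, Matrix.mul_smul, Matrix.mul_add, Matrix.trace_smul, Matrix.trace_add]
    simp [smul_eq_mul]
  -- quadratic term convexity
  have hM₀h : M₀.IsHermitian := hM₀pd.isHermitian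
  have hKh : K.IsHermitian := hKpd.isHermitian
  have hLh : L.IsHermitian := hLpd.isHermitian
  have hquad : (M₀ * Matrix.hadamard (s • Θref) M₀).trace
      ≤ (1/2 : ℝ) * ((K * Matrix.hadamard (s • Θref) K).trace
          + (L * Matrix.hadamard (s • Θref) L).trace) := by
    rw [trace_hadamard_eq Θref M₀ hΘsymm hM₀h s, trace_hadamard_eq Θref K hΘsymm hKh s,
      trace_hadamard_eq Θref L hΘsymm hLh s]
    have hsums : (∑ i, ∑ j, Θref i j * (M₀ i j)^2)
        ≤ (1/2 : ℝ) * ((∑ i, ∑ j, Θref i j * (K i j)^2) + (∑ i, ∑ j, Θref i j * (L i j)^2)) := by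
      have key : ∀ i j : Fin d, Θref i j * (M₀ i j)^2
          ≤ (1/2 : ℝ) * (Θref i j * (K i j)^2 + Θref i j * (L i j)^2) := by
        intro i j
        have hM : M₀ i j = (1/2 : ℝ) * (K i j + L i j) := by
          rw [hM₀def]
          simp [Matrix.smul_apply, Matrix.add_apply]
        have hθ : 0 ≤ Θref i j := by
          rcases eq_or_ne i j with rfl | hij
          · rw [hΘdiag i]
          · exact (hΘoff i j hij).le
        rw [hM]
        nlinarith [sq_nonneg (K i j - L i j), mul_nonneg hθ (sq_nonneg (K i j - L i j))]
      calc (∑ i, ∑ j, Θref i j * (M₀ i j)^2)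
          ≤ ∑ i, ∑ j, (1/2 : ℝ) * (Θref i j * (K i j)^2 + Θref i j * (L i j)^2) :=
            Finset.sum_le_sum fun i _ => Finset.sum_le_sum fun j _ => key i j
        _ = (1/2 : ℝ) * ((∑ i, ∑ j, Θref i j * (K i j)^2)
            + (∑ i, ∑ j, Θref i j * (L i j)^2)) := by
            rw [← Finset.sum_add_distrib, Finset.mul_sum]
            refine Finset.sum_congr rfl fun i _ => ?_
            rw [← Finset.sum_add_distrib, Finset.mul_sum]
    calc s * ∑ i, ∑ j, Θref i j * (M₀ i j)^2
        ≤ s * ((1/2 : ℝ) * ((∑ i, ∑ j, Θref i j * (K i j)^2)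
            + (∑ i, ∑ j, Θref i j * (L i j)^2))) := mul_le_mul_of_nonneg_left hsums hs0.le
      _ = (1/2 : ℝ) * (s * (∑ i, ∑ j, Θref i j * (K i j)^2)
            + s * (∑ i, ∑ j, Θref i j * (L i j)^2)) := by ring
  -- strict midpoint gain
  have hmid : (qcF d n S Θref s K + qcF d n S Θref s L) / 2 < qcF d n S Θref s M₀ := by
    rw [qcF, qcF, qcF]
    have hlog2 : n / 2 * (Real.log K.det + Real.log L.det) < n / 2 * (2 * Real.log M₀.det) :=
      mul_lt_mul_of_pos_left hlog (by linarith)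
    nlinarith [hquad, htr]
  have hcontr : qcF d n S Θref s M₀ ≤ qcF d n S Θref s K := hKmax M₀ hM₀pd
  rw [hval] at hmid hcontr
  linarith

end QCMain

/-- Existence and uniqueness of the QC maximizer for strong penalization: if the
diagonal of the symmetric matrix `S` is strictly positive and `Θ = s·Θref` with
`Θref` having strictly positive off-diagonal and zero diagonal, then for all
sufficiently large `s` the QC log posterior
`ℓ_s(A) = (n/2)·log det A⁻¹ − (n/2)·tr(S A⁻¹) − (1/4)·tr(A⁻¹((s·Θref) ∘ A⁻¹))`
has a unique global maximizer over positive definite matrices. -/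
theorem qc_unique_global_maximizer (d : ℕ) (n : ℝ) (hn : 0 < n)
    (S Θref : Matrix (Fin d) (Fin d) ℝ)
    (hSsymm : S.IsSymm) (hSdiag : ∀ i, 0 < S i i)
    (hΘsymm : Θref.IsSymm)
    (hΘoff : ∀ i j, i ≠ j → 0 < Θref i j) (hΘdiag : ∀ i, Θref i i = 0)
    (ℓ : ℝ → Matrix (Fin d) (Fin d) ℝ → ℝ)
    (hℓ : ∀ (s : ℝ) (A : Matrix (Fin d) (Fin d) ℝ),
      ℓ s A = (n / 2) * Real.log (A⁻¹).det - (n / 2) * (S * A⁻¹).trace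
        - (1 / 4) * (A⁻¹ * Matrix.hadamard (s • Θref) A⁻¹).trace) :
    ∃ s₀ : ℝ, 0 < s₀ ∧ ∀ s : ℝ, s₀ ≤ s →
      ∃! A : Matrix (Fin d) (Fin d) ℝ,
        A.PosDef ∧ ∀ B : Matrix (Fin d) (Fin d) ℝ, B.PosDef → ℓ s B ≤ ℓ s A := by
  refine ⟨1, one_pos, fun s hs => ?_⟩
  rcases Nat.eq_zero_or_pos d with hd0 | hd
  · subst hd0
    haveI : Subsingleton (Matrix (Fin 0) (Fin 0) ℝ) :=
      ⟨fun a b => by ext i j; exact i.elim0⟩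
    refine ⟨1, ⟨Matrix.PosDef.one, fun B hB => ?_⟩, fun A' hA' => Subsingleton.elim _ _⟩
    rw [Subsingleton.elim B 1]
  · have key : ∀ B : Matrix (Fin d) (Fin d) ℝ, ℓ s B = qcF d n S Θref s B⁻¹ := by
      intro B
      rw [hℓ]
      rfl
    obtain ⟨K, hKpd, hKmax⟩ := qcF_exists_max (n := n) (S := S) (Θref := Θref)
      hd hn hSdiag hΘsymm hΘoff hΘdiag s hs
    have hKunit : IsUnit K.det := isUnit_iff_ne_zero.mpr hKpd.det_pos.ne'
    have hKinvinv : (K⁻¹)⁻¹ = K := Matrix.nonsing_inv_nonsing_inv K hKunit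
    refine ⟨K⁻¹, ⟨hKpd.inv, fun B hB => ?_⟩, ?_⟩
    · calc ℓ s B = qcF d n S Θref s B⁻¹ := key B
        _ ≤ qcF d n S Θref s K := hKmax B⁻¹ hB.inv
        _ = qcF d n S Θref s (K⁻¹)⁻¹ := by rw [hKinvinv]
        _ = ℓ s K⁻¹ := (key K⁻¹).symm
    · rintro A' ⟨hA'pd, hA'max⟩
      have hA'unit : IsUnit A'.det := isUnit_iff_ne_zero.mpr hA'pd.det_pos.ne'
      have hA'invmax : ∀ L : Matrix (Fin d) (Fin d) ℝ, L.PosDef →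
          qcF d n S Θref s L ≤ qcF d n S Θref s A'⁻¹ := by
        intro L hL
        have hLunit : IsUnit L.det := isUnit_iff_ne_zero.mpr hL.det_pos.ne'
        have h1 : ℓ s L⁻¹ ≤ ℓ s A' := hA'max L⁻¹ hL.inv
        rw [key L⁻¹, key A', Matrix.nonsing_inv_nonsing_inv L hLunit] at h1
        exact h1
      have hEq : A'⁻¹ = K := qcF_max_unique (n := n) (S := S) (Θref := Θref)
        hn hΘsymm hΘoff hΘdiag s hs hA'pd.inv hKpd hA'invmax hKmax
      rw [← hEq, Matrix.nonsing_inv_nonsing_inv A' hA'unit]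
end
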